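/- Suppose the random vector Z^{0:M} = (Z̃⁰, Z̃¹, ..., Z̃ᴹ) of ℝᵖ-valued vectors satisfies the extended exchangeability property: for any family of permutations σ = (σ_1,...,σ_p) of {0,...,M} with σ_j the identity for j ∉ H_0, the swapped vector (Z̃_j^{σ_j(m)})_{j,m} has the same distribution as Z^{0:M}. Define κ_j = argmax_{0≤m≤M} (Z̃_j^m)² and τ_j = (Z̃_j^{κ_j})² - median_{m≠κ_j}(Z̃_j^m)². Then conditional on (κ_j)_{j∉H_0} and (τ_j)_{j=1}^p, the variables (κ_j)_{j∈H_0} are independent and uniformly distributed on {0,1,...,M}. -/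

import Mathlib

open MeasureTheory ENNReal

/-- The median of a list of reals (a fixed conventional choice: the middle element of the
sorted list). -/
noncomputable def medianOf (l : List ℝ) : ℝ := (l.mergeSort (· ≤ ·)).getD (l.length / 2) 0

section Aux

lemma mergeSort_sorted (l : List ℝ) : List.Pairwise (· ≤ ·) (l.mergeSort (· ≤ ·)) := by
  have h := List.pairwise_mergeSort (le := fun a b : ℝ => decide (a ≤ b))
    (fun a b c hab hbc => by simp only [decide_eq_true_eq] at *; linarith)
    (fun a b => by simpa using le_total a b) l
  exact h.imp fun h => of_decide_eq_true h

lemma medianOf_perm {l₁ l₂ : List ℝ} (h : l₁.Perm l₂) : medianOf l₁ = medianOf l₂ := by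
  have h1 : l₁.mergeSort (· ≤ ·) = l₂.mergeSort (· ≤ ·) := by
    apply List.Perm.eq_of_pairwise' (r := (· ≤ ·)) (mergeSort_sorted l₁) (mergeSort_sorted l₂)
    exact ((List.mergeSort_perm l₁ _).trans h).trans (List.mergeSort_perm l₂ _).symm
  unfold medianOf
  rw [h1, h.length_eq]

lemma sorted_getElem_le_iff {l : List ℝ} (hs : List.Pairwise (· ≤ ·) l) {k : ℕ}
    (hk : k < l.length) (t : ℝ) :
    l[k] ≤ t ↔ k + 1 ≤ l.countP (fun x => decide (x ≤ t)) := by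
  constructor
  · intro h
    have hlen : (l.take (k+1)).length = k+1 := by simp [List.length_take]; omega
    have hall : ∀ a ∈ l.take (k+1), (fun x => decide (x ≤ t)) a = true := by
      intro a ha
      obtain ⟨i, hi, rfl⟩ := List.mem_iff_getElem.1 ha
      have hik : i ≤ k := by rw [hlen] at hi; omega
      have h1 : (l.take (k+1))[i] = l[i]'(by omega) := List.getElem_take
      rw [h1]
      have h2 : l[i]'(by omega) ≤ l[k] := by
        rcases Nat.lt_or_ge i k with h' | h'
        · exact List.pairwise_iff_getElem.1 hs i k (by omega) hk h'
        · have : i = k := by omega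
          subst this; exact le_rfl
      simpa using le_trans h2 h
    have htake : (l.take (k+1)).countP (fun x => decide (x ≤ t)) = k+1 := by
      rw [List.countP_eq_length.2 hall, hlen]
    calc k + 1 = (l.take (k+1)).countP (fun x => decide (x ≤ t)) := htake.symm
      _ ≤ (l.take (k+1)).countP _ + (l.drop (k+1)).countP (fun x => decide (x ≤ t)) :=
          Nat.le_add_right _ _
      _ = l.countP (fun x => decide (x ≤ t)) := by
          rw [← List.countP_append, List.take_append_drop]
  · intro h
    by_contra hlt
    push_neg at hlt
    have hdrop : (l.drop k).countP (fun x => decide (x ≤ t)) = 0 := by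
      apply List.countP_eq_zero.2
      intro a ha
      obtain ⟨i, hi, rfl⟩ := List.mem_iff_getElem.1 ha
      have hlen' : k + i < l.length := by
        have := hi; rw [List.length_drop] at this; omega
      have h1 : (l.drop k)[i] = l[k+i]'hlen' := List.getElem_drop
      rw [h1]
      have h2 : l[k] ≤ l[k+i]'hlen' := by
        rcases Nat.eq_zero_or_pos i with h' | h'
        · subst h'; simp
        · exact List.pairwise_iff_getElem.1 hs k (k+i) hk hlen' (by omega)
      simp only [decide_eq_true_eq]
      push_neg
      linarith
    have htake : (l.take k).countP (fun x => decide (x ≤ t)) ≤ k := by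
      calc (l.take k).countP _ ≤ (l.take k).length := List.countP_le_length
        _ ≤ k := by simp [List.length_take]
    have : l.countP (fun x => decide (x ≤ t)) ≤ k := by
      have := List.countP_append (p := fun x => decide (x ≤ t)) (l₁ := l.take k) (l₂ := l.drop k)
      rw [List.take_append_drop] at this
      omega
    omega

lemma measurable_countP {α : Type*} [MeasurableSpace α] (l : List (α → ℝ))
    (h : ∀ f ∈ l, Measurable f) (t : ℝ) :
    Measurable (fun a => (l.map (fun f => f a)).countP (fun x => decide (x ≤ t))) := by
  induction l with
  | nil => simp only [List.map_nil, List.countP_nil]; exact measurable_const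
  | cons f l ih =>
    have hf : Measurable f := h f (List.mem_cons_self)
    have ihl := ih (fun g hg => h g (List.mem_cons_of_mem _ hg))
    have : (fun a => ((f :: l).map (fun g => g a)).countP (fun x => decide (x ≤ t))) =
        fun a => (l.map (fun g => g a)).countP (fun x => decide (x ≤ t)) +
          if f a ≤ t then 1 else 0 := by
      funext a; simp [List.countP_cons]
    rw [this]
    exact ihl.add (Measurable.ite (measurableSet_le hf measurable_const)
      measurable_const measurable_const)

lemma measurable_medianOf {α : Type*} [MeasurableSpace α] (l : List (α → ℝ))
    (h : ∀ f ∈ l, Measurable f) :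
    Measurable (fun a => medianOf (l.map (fun f => f a))) := by
  rcases eq_or_ne l [] with rfl | hne
  · simp only [List.map_nil]; exact measurable_const
  have hlpos : 0 < l.length := List.length_pos_iff.2 hne
  set k := l.length / 2 with hk
  have hkl : k < l.length := Nat.div_lt_self hlpos (by norm_num)
  apply measurable_of_Iic
  intro t
  have hset : (fun a => medianOf (l.map (fun f => f a))) ⁻¹' Set.Iic t =
      (fun a => (l.map (fun f => f a)).countP (fun x => decide (x ≤ t))) ⁻¹' Set.Ici (k+1) := by
    ext a
    simp only [Set.mem_preimage, Set.mem_Iic, Set.mem_Ici]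
    set L := l.map (fun f => f a) with hL
    have hLlen : L.length = l.length := List.length_map _
    have hslen : (L.mergeSort (· ≤ ·)).length = L.length := (List.mergeSort_perm L _).length_eq
    have hkL : k < (L.mergeSort (· ≤ ·)).length := by omega
    have h1 : medianOf L = (L.mergeSort (· ≤ ·))[k] := by
      unfold medianOf
      rw [List.getD_eq_getElem _ _ (by omega)]
      congr 1
      omega
    rw [h1, sorted_getElem_le_iff (mergeSort_sorted L) hkL t,
      (List.mergeSort_perm L _).countP_eq]
  rw [hset]
  exact measurable_countP l h t measurableSet_Ici

lemma measurable_cases {α β ι : Type*} [MeasurableSpace α] [MeasurableSpace β] [Countable ι]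
    [MeasurableSpace ι] [MeasurableSingletonClass ι]
    {K : α → ι} (hK : Measurable K) {g : ι → α → β} (hg : ∀ i, Measurable (g i)) :
    Measurable fun a => g (K a) a := by
  intro s hs
  have : (fun a => g (K a) a) ⁻¹' s = ⋃ i, (K ⁻¹' {i}) ∩ (g i ⁻¹' s) := by
    ext a
    simp only [Set.mem_preimage, Set.mem_iUnion, Set.mem_inter_iff, Set.mem_singleton_iff]
    exact ⟨fun h => ⟨K a, rfl, h⟩, fun ⟨i, hi, h⟩ => hi ▸ h⟩
  rw [this]
  exact MeasurableSet.iUnion fun i => (hK (measurableSet_singleton i)).inter (hg i hs)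

end Aux

section KT
variable (M p : ℕ)

def Pset (j : Fin p) (m : Fin (M+1)) : Set (Fin (M+1) × Fin p → ℝ) :=
  {z | ∀ m', m' ≠ m → (z (m', j))^2 < (z (m, j))^2}

variable {M p}

lemma Pset_unique {j : Fin p} {m m' : Fin (M+1)} {z : Fin (M+1) × Fin p → ℝ}
    (h : z ∈ Pset M p j m) (h' : z ∈ Pset M p j m') : m = m' := by
  by_contra hne
  exact absurd (h m' (Ne.symm hne)) (not_lt.2 (le_of_lt (h' m hne)))

lemma measurableSet_Pset (j : Fin p) (m : Fin (M+1)) : MeasurableSet (Pset M p j m) := by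
  have : Pset M p j m =
      ⋂ m', {z : Fin (M+1) × Fin p → ℝ | m' ≠ m → (z (m', j))^2 < (z (m, j))^2} := by
    ext z; simp [Pset]
  rw [this]
  apply MeasurableSet.iInter
  intro m'
  by_cases h : m' = m
  · simp [h]
  · have : {z : Fin (M+1) × Fin p → ℝ | m' ≠ m → (z (m', j))^2 < (z (m, j))^2} =
        {z : Fin (M+1) × Fin p → ℝ | (z (m', j))^2 < (z (m, j))^2} := by
      ext z; simp [h]
    rw [this]
    exact measurableSet_lt ((measurable_pi_apply _).pow_const 2)
      ((measurable_pi_apply _).pow_const 2)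

variable (M p)

open Classical in
noncomputable def Kf (j : Fin p) (z : Fin (M+1) × Fin p → ℝ) : Fin (M+1) :=
  if h : ∃ m, z ∈ Pset M p j m then h.choose else 0

noncomputable def Tf (j : Fin p) (z : Fin (M+1) × Fin p → ℝ) : ℝ :=
  (z (Kf M p j z, j))^2 - medianOf (((List.finRange (M+1)).filter fun m => m ≠ Kf M p j z).map
    fun m => (z (m, j))^2)

variable {M p}

lemma Kf_eq {j : Fin p} {m : Fin (M+1)} {z : Fin (M+1) × Fin p → ℝ} (h : z ∈ Pset M p j m) :
    Kf M p j z = m := by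
  have he : ∃ m, z ∈ Pset M p j m := ⟨m, h⟩
  rw [Kf, dif_pos he]
  exact Pset_unique he.choose_spec h

lemma measurable_Kf (j : Fin p) : Measurable (Kf M p j) := by
  apply measurable_to_countable'
  intro m
  have : Kf M p j ⁻¹' {m} = Pset M p j m ∪
      ((⋂ m', (Pset M p j m')ᶜ) ∩ (if (0 : Fin (M+1)) = m then Set.univ else ∅)) := by
    ext z
    simp only [Set.mem_preimage, Set.mem_singleton_iff, Set.mem_union, Set.mem_inter_iff,
      Set.mem_iInter, Set.mem_compl_iff]
    constructor
    · intro h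
      by_cases he : ∃ m', z ∈ Pset M p j m'
      · left
        obtain ⟨m', hm'⟩ := he
        rw [Kf_eq hm'] at h
        exact h ▸ hm'
      · right
        push_neg at he
        refine ⟨he, ?_⟩
        rw [Kf, dif_neg (by push_neg; exact he)] at h
        simp [h]
    · rintro (h | ⟨h, h0⟩)
      · exact Kf_eq h
      · rw [Kf, dif_neg (by push_neg; exact h)]
        by_cases h' : (0 : Fin (M+1)) = m
        · exact h'
        · simp [h'] at h0
  rw [this]
  refine (measurableSet_Pset j m).union (MeasurableSet.inter (MeasurableSet.iInter fun m' =>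
    (measurableSet_Pset j m').compl) ?_)
  by_cases h' : (0 : Fin (M+1)) = m <;> simp [h']

lemma measurable_Tf (j : Fin p) : Measurable (Tf M p j) := by
  have : Tf M p j = fun z => (fun m (z : Fin (M+1) × Fin p → ℝ) =>
      (z (m, j))^2 - medianOf (((List.finRange (M+1)).filter fun m' => m' ≠ m).map
        fun m' => (z (m', j))^2)) (Kf M p j z) z := rfl
  rw [this]
  refine measurable_cases (measurable_Kf j) (g := fun m z =>
      (z (m, j))^2 - medianOf (((List.finRange (M+1)).filter fun m' => m' ≠ m).map
        fun m' => (z (m', j))^2)) fun m => ?_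
  apply Measurable.sub ((measurable_pi_apply _).pow_const 2)
  have : (fun z : Fin (M+1) × Fin p → ℝ =>
      medianOf (((List.finRange (M+1)).filter fun m' => m' ≠ m).map fun m' => (z (m', j))^2)) =
      fun z => medianOf ((((List.finRange (M+1)).filter fun m' => m' ≠ m).map
        fun m' (z : Fin (M+1) × Fin p → ℝ) => (z (m', j))^2).map fun f => f z) := by
    funext z; rw [List.map_map]; rfl
  rw [this]
  apply measurable_medianOf
  intro f hf
  simp only [List.mem_map] at hf
  obtain ⟨m', _, rfl⟩ := hf
  exact (measurable_pi_apply _).pow_const 2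

section phi
variable (σ : Fin p → Equiv.Perm (Fin (M+1)))

def phi (z : Fin (M+1) × Fin p → ℝ) : Fin (M+1) × Fin p → ℝ := fun q => z (σ q.2 q.1, q.2)

lemma measurable_phi : Measurable (phi (M := M) (p := p) σ) :=
  measurable_pi_lambda _ fun _ => measurable_pi_apply _

variable {σ}

lemma phi_mem_Pset {z : Fin (M+1) × Fin p → ℝ} {j : Fin p} {m : Fin (M+1)} :
    phi σ z ∈ Pset M p j m ↔ z ∈ Pset M p j (σ j m) := by
  constructor
  · intro h m'' hne
    have := h ((σ j)⁻¹ m'') (by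
      intro e
      apply hne
      rw [← e]
      simp)
    simpa [phi] using this
  · intro h m' hne
    exact h (σ j m') (by simpa using hne)

lemma Kf_phi {z : Fin (M+1) × Fin p → ℝ} {j : Fin p} (hz : ∃ m, z ∈ Pset M p j m) :
    Kf M p j (phi σ z) = (σ j)⁻¹ (Kf M p j z) := by
  obtain ⟨m, hm⟩ := hz
  rw [Kf_eq hm]
  apply Kf_eq
  rw [phi_mem_Pset]
  simpa using hm

lemma Tf_phi {z : Fin (M+1) × Fin p → ℝ} {j : Fin p} (hz : ∃ m, z ∈ Pset M p j m) :
    Tf M p j (phi σ z) = Tf M p j z := by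
  have hK := Kf_phi (σ := σ) hz
  unfold Tf
  rw [hK]
  have h1 : phi σ z ((σ j)⁻¹ (Kf M p j z), j) = z (Kf M p j z, j) := by simp [phi]
  rw [h1]
  congr 1
  apply medianOf_perm
  have hperm : (((List.finRange (M+1)).filter fun m => m ≠ (σ j)⁻¹ (Kf M p j z)).map
      (σ j)).Perm ((List.finRange (M+1)).filter fun m => m ≠ Kf M p j z) := by
    refine (List.perm_ext_iff_of_nodup (((List.nodup_finRange _).filter _).map
      (Equiv.injective _)) ((List.nodup_finRange _).filter _)).2 ?_
    · intro a
      simp only [List.mem_map, List.mem_filter, List.mem_finRange, true_and, decide_eq_true_eq]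
      constructor
      · rintro ⟨m, hm, rfl⟩
        intro e
        exact hm (by rw [← e]; simp)
      · intro ha
        exact ⟨(σ j)⁻¹ a, by
          intro e
          apply ha
          have := congrArg (σ j) e
          simpa using this, by simp⟩
  have := hperm.map (fun m => (z (m, j))^2)
  rw [List.map_map] at this
  convert this using 2
  rfl
end phi
end KT

/-- Lemma 1: if the `Z`-scores `Z⁰, …, Zᴹ` satisfy the extended exchangeability property with
respect to the null set `H₀`, and `κ_j`, `τ_j` are the knockoff statistics (argmax and gap to
the median, with the argmax a.s. unique), then conditional on the non-null `κ`'s and all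
`τ`'s, the null `κ_j`'s are i.i.d. uniform on `{0,…,M}`: for every choice of values and every
event depending only on the non-null `κ`'s and `τ`, the joint probability factorizes with
factor `(1/(M+1))^{|H₀|}`. -/
theorem knockoff_stats_null_kappa_iid_uniform {Ω : Type*} [MeasurableSpace Ω] (μ : Measure Ω)
    [IsProbabilityMeasure μ] (p M : ℕ) (hM : 1 ≤ M)
    (H0 : Finset (Fin p))
    (Z : Fin (M + 1) → Fin p → Ω → ℝ) (hZmeas : ∀ m j, Measurable (Z m j))
    -- extended exchangeability: swapping copy indices at null coordinates leaves the law
    -- of all the `Z`-scores unchanged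
    (hExch : ∀ σ : Fin p → Equiv.Perm (Fin (M + 1)), (∀ j ∉ H0, σ j = 1) →
      Measure.map (fun ω => fun q : Fin (M + 1) × Fin p => Z (σ q.2 q.1) q.2 ω) μ =
        Measure.map (fun ω => fun q : Fin (M + 1) × Fin p => Z q.1 q.2 ω) μ)
    (κ : Fin p → Ω → Fin (M + 1)) (τ : Fin p → Ω → ℝ)
    (hκmeas : ∀ j, Measurable (κ j)) (hτmeas : ∀ j, Measurable (τ j))
    -- `κ_j` is the (a.s. unique) argmax of the squared `Z`-scores
    (hκ : ∀ᵐ ω ∂μ, ∀ j : Fin p, ∀ m : Fin (M + 1), m ≠ κ j ω →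
      (Z m j ω) ^ 2 < (Z (κ j ω) j ω) ^ 2)
    -- `τ_j` is the squared maximum minus the median of the other squared `Z`-scores
    (hτ : ∀ j ω, τ j ω = (Z (κ j ω) j ω) ^ 2 -
      medianOf (((List.finRange (M + 1)).filter fun m => m ≠ κ j ω).map
        fun m => (Z m j ω) ^ 2)) :
    ∀ v : {j : Fin p // j ∈ H0} → Fin (M + 1),
      ∀ A : Set (({j : Fin p // j ∉ H0} → Fin (M + 1)) × (Fin p → ℝ)), MeasurableSet A →
        μ {ω | (∀ j : {j : Fin p // j ∈ H0}, κ j ω = v j) ∧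
            ((fun j : {j : Fin p // j ∉ H0} => κ j ω), fun j : Fin p => τ j ω) ∈ A} =
          (((M : ℝ≥0∞) + 1)⁻¹) ^ H0.card *
            μ {ω | ((fun j : {j : Fin p // j ∉ H0} => κ j ω), fun j : Fin p => τ j ω) ∈ A} := by
  classical
  intro v A hA
  set Zarr : Ω → (Fin (M+1) × Fin p → ℝ) := fun ω q => Z q.1 q.2 ω with hZarr_def
  have hZarr : Measurable Zarr := measurable_pi_lambda _ fun q => hZmeas q.1 q.2
  set G : Set (Fin (M+1) × Fin p → ℝ) := ⋂ j, ⋃ m, Pset M p j m with hG_def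
  have hGmeas : MeasurableSet G :=
    MeasurableSet.iInter fun j => MeasurableSet.iUnion fun m => measurableSet_Pset j m
  have hGmem : ∀ z ∈ G, ∀ j : Fin p, ∃ m, z ∈ Pset M p j m := by
    intro z hz j
    have := Set.mem_iInter.1 hz j
    exact Set.mem_iUnion.1 this
  set stat : (Fin (M+1) × Fin p → ℝ) → (({j : Fin p // j ∉ H0} → Fin (M+1)) × (Fin p → ℝ)) :=
    fun z => (fun j => Kf M p j.1 z, fun j => Tf M p j z) with hstat_def
  have hstat : Measurable stat :=
    Measurable.prod (measurable_pi_lambda _ fun j => measurable_Kf _)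
      (measurable_pi_lambda _ fun j => measurable_Tf _)
  set Ev : ({j : Fin p // j ∈ H0} → Fin (M+1)) → Set (Fin (M+1) × Fin p → ℝ) :=
    fun w => (G ∩ ⋂ j : {j : Fin p // j ∈ H0}, (Kf M p j.1) ⁻¹' {w j}) ∩ stat ⁻¹' A
    with hEv_def
  set E0 : Set (Fin (M+1) × Fin p → ℝ) := G ∩ stat ⁻¹' A with hE0_def
  have hEvmeas : ∀ w, MeasurableSet (Ev w) := fun w =>
    ((hGmeas.inter (MeasurableSet.iInter fun j =>
      measurable_Kf _ (measurableSet_singleton _))).inter (hstat hA))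
  have hE0meas : MeasurableSet E0 := hGmeas.inter (hstat hA)
  -- a.e. identification of κ, τ with Kf, Tf of the array
  have key : ∀ᵐ ω ∂μ, (∀ j : Fin p, Kf M p j (Zarr ω) = κ j ω) ∧
      (∀ j : Fin p, Tf M p j (Zarr ω) = τ j ω) ∧ Zarr ω ∈ G := by
    filter_upwards [hκ] with ω hω
    have hP : ∀ j : Fin p, Zarr ω ∈ Pset M p j (κ j ω) := fun j => fun m' hm' => hω j m' hm'
    have hKf : ∀ j : Fin p, Kf M p j (Zarr ω) = κ j ω := fun j => Kf_eq (hP j)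
    refine ⟨hKf, fun j => ?_, ?_⟩
    · rw [hτ j ω]
      unfold Tf
      rw [hKf j]
    · exact Set.mem_iInter.2 fun j => Set.mem_iUnion.2 ⟨κ j ω, hP j⟩
  -- event identities
  have h1 : ∀ w : {j : Fin p // j ∈ H0} → Fin (M+1),
      μ {ω | (∀ j : {j : Fin p // j ∈ H0}, κ j ω = w j) ∧
        ((fun j : {j : Fin p // j ∉ H0} => κ j ω), fun j : Fin p => τ j ω) ∈ A} =
      (μ.map Zarr) (Ev w) := by
    intro w
    rw [Measure.map_apply hZarr (hEvmeas w)]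
    apply measure_congr
    apply Filter.eventuallyEq_set.2
    filter_upwards [key] with ω hω
    obtain ⟨hKω, hTω, hGω⟩ := hω
    have hstat_eq : stat (Zarr ω) =
        ((fun j : {j : Fin p // j ∉ H0} => κ j ω), fun j : Fin p => τ j ω) := by
      rw [hstat_def]
      exact Prod.ext (funext fun j => hKω j.1) (funext fun j => hTω j)
    simp only [Set.mem_setOf_eq, Set.mem_preimage, hEv_def, Set.mem_inter_iff,
      Set.mem_iInter, Set.mem_singleton_iff, hstat_eq]
    constructor
    · rintro ⟨h1', h2'⟩
      exact ⟨⟨hGω, fun j => (hKω j.1).trans (h1' j)⟩, h2'⟩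
    · rintro ⟨⟨_, h1'⟩, h2'⟩
      exact ⟨fun j => (hKω j.1).symm.trans (h1' j), h2'⟩
  have h2 : μ {ω | ((fun j : {j : Fin p // j ∉ H0} => κ j ω), fun j : Fin p => τ j ω) ∈ A} =
      (μ.map Zarr) E0 := by
    rw [Measure.map_apply hZarr hE0meas]
    apply measure_congr
    apply Filter.eventuallyEq_set.2
    filter_upwards [key] with ω hω
    obtain ⟨hKω, hTω, hGω⟩ := hω
    have hstat_eq : stat (Zarr ω) =
        ((fun j : {j : Fin p // j ∉ H0} => κ j ω), fun j : Fin p => τ j ω) := by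
      rw [hstat_def]
      exact Prod.ext (funext fun j => hKω j.1) (funext fun j => hTω j)
    simp only [Set.mem_setOf_eq, Set.mem_preimage, hE0_def, Set.mem_inter_iff, hstat_eq]
    exact ⟨fun h => ⟨hGω, h⟩, fun h => h.2⟩
  -- all the Ev w have the same measure
  have h3 : ∀ w : {j : Fin p // j ∈ H0} → Fin (M+1),
      (μ.map Zarr) (Ev w) = (μ.map Zarr) (Ev v) := by
    intro w
    set σ : Fin p → Equiv.Perm (Fin (M+1)) :=
      fun j => if h : j ∈ H0 then Equiv.swap (w ⟨j, h⟩) (v ⟨j, h⟩) else 1 with hσ_def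
    have hσ : ∀ j ∉ H0, σ j = 1 := fun j hj => dif_neg hj
    have hmap : (μ.map Zarr).map (phi σ) = μ.map Zarr := by
      rw [Measure.map_map (measurable_phi σ) hZarr]
      exact hExch σ hσ
    have hGiff : ∀ z, phi σ z ∈ G ↔ z ∈ G := by
      intro z
      simp only [hG_def, Set.mem_iInter, Set.mem_iUnion]
      constructor
      · intro h j
        obtain ⟨m, hm⟩ := h j
        exact ⟨σ j m, phi_mem_Pset.1 hm⟩
      · intro h j
        obtain ⟨m, hm⟩ := h j
        exact ⟨(σ j)⁻¹ m, phi_mem_Pset.2 (by simpa using hm)⟩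
    have hpre : phi σ ⁻¹' (Ev w) = Ev v := by
      ext z
      simp only [hEv_def, Set.mem_preimage, Set.mem_inter_iff, Set.mem_iInter,
        Set.mem_singleton_iff]
      by_cases hzG : z ∈ G
      · have hz : ∀ j : Fin p, ∃ m, z ∈ Pset M p j m := hGmem z hzG
        have hKphi : ∀ j : Fin p, Kf M p j (phi σ z) = (σ j)⁻¹ (Kf M p j z) :=
          fun j => Kf_phi (hz j)
        have hTphi : ∀ j : Fin p, Tf M p j (phi σ z) = Tf M p j z := fun j => Tf_phi (hz j)
        have hstatphi : stat (phi σ z) = stat z := by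
          rw [hstat_def]
          refine Prod.ext (funext fun j => ?_) (funext fun j => hTphi j)
          show Kf M p j.1 (phi σ z) = Kf M p j.1 z
          have : σ j.1 = 1 := hσ j.1 j.2
          rw [hKphi j.1, this]
          rfl
        have hKiff : ∀ j : {j : Fin p // j ∈ H0},
            (Kf M p j.1 (phi σ z) = w j ↔ Kf M p j.1 z = v j) := by
          intro j
          rw [hKphi j.1]
          have hσj : σ j.1 = Equiv.swap (w j) (v j) := by
            show (if h : j.1 ∈ H0 then Equiv.swap (w ⟨j.1, h⟩) (v ⟨j.1, h⟩) else 1) = _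
            rw [dif_pos j.2]
          rw [hσj]
          constructor
          · intro h
            have := congrArg (Equiv.swap (w j) (v j)) h
            rw [Equiv.Perm.inv_def, Equiv.apply_symm_apply, Equiv.swap_apply_left] at this
            exact this
          · intro h
            rw [h]
            simp [Equiv.swap_apply_right]
        constructor
        · rintro ⟨⟨_, hKw⟩, hAw⟩
          exact ⟨⟨hzG, fun j => (hKiff j).1 (hKw j)⟩, by rwa [hstatphi] at hAw⟩
        · rintro ⟨⟨_, hKv⟩, hAv⟩
          exact ⟨⟨(hGiff z).2 hzG, fun j => (hKiff j).2 (hKv j)⟩, by rwa [hstatphi]⟩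
      · constructor
        · rintro ⟨⟨hg, _⟩, _⟩
          exact absurd ((hGiff z).1 hg) hzG
        · rintro ⟨⟨hg, _⟩, _⟩
          exact absurd hg hzG
    calc (μ.map Zarr) (Ev w) = ((μ.map Zarr).map (phi σ)) (Ev w) := by rw [hmap]
      _ = (μ.map Zarr) (phi σ ⁻¹' (Ev w)) :=
          Measure.map_apply (measurable_phi σ) (hEvmeas w)
      _ = (μ.map Zarr) (Ev v) := by rw [hpre]
  -- partition of E0 into the Ev w
  have hpart : E0 = ⋃ w : {j : Fin p // j ∈ H0} → Fin (M+1), Ev w := by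
    ext z
    simp only [hE0_def, hEv_def, Set.mem_inter_iff, Set.mem_iUnion, Set.mem_iInter,
      Set.mem_singleton_iff, Set.mem_preimage]
    constructor
    · rintro ⟨hg, ha⟩
      exact ⟨fun j => Kf M p j.1 z, ⟨hg, fun j => rfl⟩, ha⟩
    · rintro ⟨w, ⟨hg, _⟩, ha⟩
      exact ⟨hg, ha⟩
  have hdisj : Pairwise (Function.onFun Disjoint Ev) := by
    intro w₁ w₂ hne
    rw [Function.onFun, Set.disjoint_left]
    intro z hz₁ hz₂
    apply hne
    funext j
    have e1 : Kf M p j.1 z = w₁ j := (Set.mem_iInter.1 hz₁.1.2 j)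
    have e2 : Kf M p j.1 z = w₂ j := (Set.mem_iInter.1 hz₂.1.2 j)
    rw [← e1, e2]
  have hsum : (μ.map Zarr) E0 =
      (Fintype.card ({j : Fin p // j ∈ H0} → Fin (M+1))) • ((μ.map Zarr) (Ev v)) := by
    rw [hpart, measure_iUnion hdisj hEvmeas, tsum_fintype]
    rw [Finset.sum_congr rfl (fun w _ => h3 w), Finset.sum_const, Finset.card_univ]
  have hcard : (Fintype.card ({j : Fin p // j ∈ H0} → Fin (M+1))) = (M+1) ^ H0.card := by
    rw [Fintype.card_fun, Fintype.card_fin, Fintype.card_coe]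
  rw [h1 v, h2, hsum, hcard]
  have hMne0 : ((M : ℝ≥0∞) + 1) ≠ 0 := by simp
  have hMnetop : ((M : ℝ≥0∞) + 1) ≠ ⊤ := by
    exact ENNReal.add_ne_top.2 ⟨ENNReal.natCast_ne_top M, one_ne_top⟩
  rw [nsmul_eq_mul]
  push_cast
  rw [← mul_assoc, ← mul_pow, ENNReal.inv_mul_cancel hMne0 hMnetop, one_pow, one_mul]
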